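/- arXiv:2412.04928 — 3 statements merged into one kernel-verified Lean document; each statement's English description precedes it below -/
import Mathlib

section
/- For any Hahn series f, one has val L(f) ≥ ψ(val f), and if val f is not the opposite of a slope of L (i.e., val f ∉ −S(L)), then val L(f) = ψ(val f). -/
open Polynomial Finset

noncomputable def PL {K : Type*} [Field K] (ℓ n : ℕ) (a : ℕ → Polynomial K) : Finset (ℚ × ℚ) :=
  (Finset.range (n + 1)).biUnion fun i =>
    (a i).support.image fun j : ℕ => ((ℓ : ℚ) ^ i, (j : ℚ))

noncomputable def PsiSet {K : Type*} [Field K] (ℓ n : ℕ) (a : ℕ → Polynomial K) (v : ℚ) :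
    Finset ℚ :=
  (PL ℓ n a).image fun p => v * p.1 + p.2

noncomputable def psi {K : Type*} [Field K] (ℓ n : ℕ) (a : ℕ → Polynomial K) (v : ℚ) : ℚ :=
  WithTop.untopD 0 ((PsiSet ℓ n a v).min)

noncomputable def piF {K : Type*} [Field K] (ℓ n : ℕ) (a : ℕ → Polynomial K) (q : ℚ) : ℚ :=
  WithBot.unbotD 0 (((PL ℓ n a).image fun p => (q - p.2) / p.1).max)

def slopeSet {K : Type*} [Field K] (ℓ n : ℕ) (a : ℕ → Polynomial K) : Set ℚ :=
  {μ | ∃ b : ℚ,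
    (∃ p ∈ PL ℓ n a, ∃ q ∈ PL ℓ n a, p ≠ q ∧ p.2 - μ * p.1 = b ∧ q.2 - μ * q.1 = b) ∧
    ∀ p ∈ PL ℓ n a, b ≤ p.2 - μ * p.1}

noncomputable def scaleEmb (ℓ : ℕ) (hℓ : 2 ≤ ℓ) (i : ℕ) : ℚ ↪o ℚ :=
  (OrderIso.mulLeft₀ ((ℓ : ℚ) ^ i)
    (pow_pos (by exact_mod_cast Nat.lt_of_lt_of_le Nat.zero_lt_two hℓ) i)).toOrderEmbedding

noncomputable def mahlerOp {K : Type*} [Field K] (ℓ : ℕ) (hℓ : 2 ≤ ℓ) (n : ℕ)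
    (a : ℕ → Polynomial K) (f : HahnSeries ℚ K) : HahnSeries ℚ K :=
  ∑ i ∈ Finset.range (n + 1),
    (HahnSeries.ofPowerSeries ℚ K (a i : PowerSeries K)) *
      HahnSeries.embDomain (scaleEmb ℓ hℓ i) f

section Aux

variable {K : Type*} [Field K]

lemma scaleEmb_apply (ℓ : ℕ) (hℓ : 2 ≤ ℓ) (i : ℕ) (w : ℚ) :
    scaleEmb ℓ hℓ i w = (ℓ : ℚ) ^ i * w := rfl

lemma ofPS_coeff (p : Polynomial K) (m : ℕ) :
    (HahnSeries.ofPowerSeries ℚ K (p : PowerSeries K)).coeff (m : ℚ) = p.coeff m := by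
  rw [HahnSeries.ofPowerSeries_apply_coeff, Polynomial.coeff_coe]

lemma ofPS_support (p : Polynomial K) {g : ℚ}
    (hg : g ∈ (HahnSeries.ofPowerSeries ℚ K (p : PowerSeries K)).support) :
    ∃ m : ℕ, g = (m : ℚ) ∧ p.coeff m ≠ 0 := by
  rw [HahnSeries.ofPowerSeries_apply] at hg
  obtain ⟨m, hm, rfl⟩ := HahnSeries.support_embDomain_subset hg
  refine ⟨m, rfl, ?_⟩
  simpa [HahnSeries.coeff_toPowerSeries_symm, Polynomial.coeff_coe] using hm

lemma ofPS_ne_zero {p : Polynomial K} (hp : p ≠ 0) :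
    HahnSeries.ofPowerSeries ℚ K (p : PowerSeries K) ≠ 0 := by
  intro h
  apply hp
  have := HahnSeries.ofPowerSeries_injective (Γ := ℚ) (R := K)
    (by rw [h, map_zero] : HahnSeries.ofPowerSeries ℚ K (p : PowerSeries K)
      = HahnSeries.ofPowerSeries ℚ K 0)
  exact_mod_cast this

lemma ofPS_orderTop {p : Polynomial K} (hp : p ≠ 0) :
    (HahnSeries.ofPowerSeries ℚ K (p : PowerSeries K)).orderTop = (p.natTrailingDegree : ℚ) := by
  apply HahnSeries.orderTop_eq_of_le
  · rw [HahnSeries.mem_support, ofPS_coeff]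
    exact fun h => hp (Polynomial.trailingCoeff_eq_zero.mp h)
  · intro g' hg'
    obtain ⟨m, rfl, hm⟩ := ofPS_support p hg'
    exact_mod_cast Polynomial.natTrailingDegree_le_of_ne_zero hm

lemma ofPS_order {p : Polynomial K} (hp : p ≠ 0) :
    (HahnSeries.ofPowerSeries ℚ K (p : PowerSeries K)).order = (p.natTrailingDegree : ℚ) := by
  have h := HahnSeries.order_eq_orderTop_of_ne_zero (ofPS_ne_zero hp)
  rw [ofPS_orderTop hp] at h
  exact_mod_cast h

lemma embD_ne_zero {f : HahnSeries ℚ K} (hf : f ≠ 0) (φ : ℚ ↪o ℚ) :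
    HahnSeries.embDomain φ f ≠ 0 := by
  intro h
  exact hf (HahnSeries.embDomain_injective (by rw [h, HahnSeries.embDomain_zero]))

lemma embD_orderTop {f : HahnSeries ℚ K} (hf : f ≠ 0) (φ : ℚ ↪o ℚ) :
    (HahnSeries.embDomain φ f).orderTop = (φ f.order : ℚ) := by
  apply HahnSeries.orderTop_eq_of_le
  · rw [HahnSeries.mem_support, HahnSeries.embDomain_coeff]
    exact fun h => hf (HahnSeries.coeff_order_eq_zero.mp h)
  · intro g' hg'
    obtain ⟨w, hw, rfl⟩ := HahnSeries.support_embDomain_subset hg'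
    exact φ.monotone (HahnSeries.order_le_of_coeff_ne_zero hw)

lemma embD_order {f : HahnSeries ℚ K} (hf : f ≠ 0) (φ : ℚ ↪o ℚ) :
    (HahnSeries.embDomain φ f).order = φ f.order := by
  have h := HahnSeries.order_eq_orderTop_of_ne_zero (embD_ne_zero hf φ)
  rw [embD_orderTop hf φ] at h
  exact_mod_cast h

lemma term_order {p : Polynomial K} (hp : p ≠ 0) {f : HahnSeries ℚ K} (hf : f ≠ 0)
    (φ : ℚ ↪o ℚ) :
    (HahnSeries.ofPowerSeries ℚ K (p : PowerSeries K) * HahnSeries.embDomain φ f).order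
      = (p.natTrailingDegree : ℚ) + φ f.order := by
  rw [HahnSeries.order_mul (ofPS_ne_zero hp) (embD_ne_zero hf φ), ofPS_order hp,
    embD_order hf φ]

lemma term_ne_zero {p : Polynomial K} (hp : p ≠ 0) {f : HahnSeries ℚ K} (hf : f ≠ 0)
    (φ : ℚ ↪o ℚ) :
    HahnSeries.ofPowerSeries ℚ K (p : PowerSeries K) * HahnSeries.embDomain φ f ≠ 0 :=
  mul_ne_zero (ofPS_ne_zero hp) (embD_ne_zero hf φ)

lemma term_orderTop {p : Polynomial K} (hp : p ≠ 0) {f : HahnSeries ℚ K} (hf : f ≠ 0)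
    (φ : ℚ ↪o ℚ) :
    (HahnSeries.ofPowerSeries ℚ K (p : PowerSeries K) * HahnSeries.embDomain φ f).orderTop
      = ((p.natTrailingDegree : ℚ) + φ f.order : ℚ) := by
  rw [← HahnSeries.order_eq_orderTop_of_ne_zero (term_ne_zero hp hf φ), term_order hp hf φ]

lemma term_leadCoeff {p : Polynomial K} (hp : p ≠ 0) {f : HahnSeries ℚ K} (hf : f ≠ 0)
    (φ : ℚ ↪o ℚ) :
    (HahnSeries.ofPowerSeries ℚ K (p : PowerSeries K) * HahnSeries.embDomain φ f).coeff
      ((p.natTrailingDegree : ℚ) + φ f.order) ≠ 0 := by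
  have h := HahnSeries.coeff_orderTop_ne (term_orderTop hp hf φ)
  exact h

lemma le_orderTop_sum {ι : Type*} (s : Finset ι) (F : ι → HahnSeries ℚ K) (c : WithTop ℚ)
    (h : ∀ i ∈ s, c ≤ (F i).orderTop) : c ≤ (∑ i ∈ s, F i).orderTop := by
  induction s using Finset.cons_induction with
  | empty => simp
  | cons i s hi ih =>
    rw [Finset.sum_cons]
    refine le_trans ?_ HahnSeries.min_orderTop_le_orderTop_add
    exact le_min (h i (Finset.mem_cons_self i s)) (ih fun j hj => h j (Finset.mem_cons_of_mem hj))

lemma mem_PL_iff {ℓ n : ℕ} {a : ℕ → Polynomial K} {p : ℚ × ℚ} :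
    p ∈ PL ℓ n a ↔ ∃ i ≤ n, ∃ j ∈ (a i).support, p = ((ℓ : ℚ) ^ i, (j : ℚ)) := by
  simp only [PL, Finset.mem_biUnion, Finset.mem_range, Finset.mem_image, Nat.lt_add_one_iff]
  constructor
  · rintro ⟨i, hi, j, hj, rfl⟩; exact ⟨i, hi, j, hj, rfl⟩
  · rintro ⟨i, hi, j, hj, rfl⟩; exact ⟨i, hi, j, hj, rfl⟩

lemma PL_nonempty {ℓ n : ℕ} {a : ℕ → Polynomial K} (h0 : a 0 ≠ 0) : (PL ℓ n a).Nonempty := by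
  refine ⟨((ℓ : ℚ) ^ 0, ((a 0).natTrailingDegree : ℚ)), mem_PL_iff.mpr ⟨0, Nat.zero_le n,
    (a 0).natTrailingDegree, ?_, rfl⟩⟩
  exact Polynomial.natTrailingDegree_mem_support_of_nonzero h0

lemma PsiSet_nonempty {ℓ n : ℕ} {a : ℕ → Polynomial K} (h0 : a 0 ≠ 0) (v : ℚ) :
    (PsiSet ℓ n a v).Nonempty := by
  rw [PsiSet]
  exact (PL_nonempty h0).image _

lemma psi_eq {ℓ n : ℕ} {a : ℕ → Polynomial K} (h0 : a 0 ≠ 0) (v : ℚ) :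
    psi ℓ n a v = (PsiSet ℓ n a v).min' (PsiSet_nonempty h0 v) := by
  rw [psi, ← Finset.coe_min' (PsiSet_nonempty h0 v)]
  rfl

lemma psi_le {ℓ n : ℕ} {a : ℕ → Polynomial K} (h0 : a 0 ≠ 0) (v : ℚ) {p : ℚ × ℚ}
    (hp : p ∈ PL ℓ n a) : psi ℓ n a v ≤ v * p.1 + p.2 := by
  rw [psi_eq h0 v]
  exact Finset.min'_le _ _ (Finset.mem_image_of_mem _ hp)

lemma psi_mem {ℓ n : ℕ} {a : ℕ → Polynomial K} (h0 : a 0 ≠ 0) (v : ℚ) :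
    ∃ p ∈ PL ℓ n a, psi ℓ n a v = v * p.1 + p.2 := by
  have := Finset.min'_mem (PsiSet ℓ n a v) (PsiSet_nonempty h0 v)
  rw [← psi_eq h0 v, PsiSet, Finset.mem_image] at this
  obtain ⟨p, hp, hpe⟩ := this
  exact ⟨p, hp, hpe.symm⟩

end Aux

theorem stmt3 {K : Type*} [Field K] (ℓ n : ℕ) (hℓ : 2 ≤ ℓ) (a : ℕ → Polynomial K)
    (h0 : a 0 ≠ 0) (hn : a n ≠ 0) (f : HahnSeries ℚ K) :
    WithTop.map (psi ℓ n a) f.orderTop ≤ (mahlerOp ℓ hℓ n a f).orderTop ∧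
    ((∀ μ ∈ slopeSet ℓ n a, f.orderTop ≠ ((-μ : ℚ) : WithTop ℚ)) →
      (mahlerOp ℓ hℓ n a f).orderTop = WithTop.map (psi ℓ n a) f.orderTop) := by
  by_cases hf : f = 0
  · subst hf
    have hm : mahlerOp ℓ hℓ n a 0 = 0 := by
      unfold mahlerOp
      simp [HahnSeries.embDomain_zero]
    rw [hm]
    simp
  · have h1ℓ : (1 : ℚ) < (ℓ : ℚ) := by exact_mod_cast hℓ
    set v : ℚ := f.order with hv
    have hOT : f.orderTop = (v : WithTop ℚ) := (HahnSeries.order_eq_orderTop_of_ne_zero hf).symm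
    have hPLi : ∀ i ≤ n, a i ≠ 0 → ((ℓ:ℚ)^i, (((a i).natTrailingDegree : ℕ) : ℚ)) ∈ PL ℓ n a :=
      fun i hi hai => mem_PL_iff.mpr ⟨i, hi, _,
        Polynomial.natTrailingDegree_mem_support_of_nonzero hai, rfl⟩
    have hTorder : ∀ i, a i ≠ 0 →
        (HahnSeries.ofPowerSeries ℚ K (a i : PowerSeries K) *
          HahnSeries.embDomain (scaleEmb ℓ hℓ i) f).orderTop
        = ((((a i).natTrailingDegree : ℚ) + (ℓ:ℚ)^i * v : ℚ) : WithTop ℚ) := by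
      intro i hai
      rw [term_orderTop hai hf (scaleEmb ℓ hℓ i), scaleEmb_apply]
    have hψle : ∀ i ≤ n, a i ≠ 0 →
        psi ℓ n a v ≤ ((a i).natTrailingDegree : ℚ) + (ℓ:ℚ)^i * v := by
      intro i hi hai
      have h := psi_le h0 v (hPLi i hi hai)
      have h' : psi ℓ n a v ≤ v * (ℓ:ℚ)^i + ((a i).natTrailingDegree : ℚ) := h
      linarith
    have hOT1 : (psi ℓ n a v : WithTop ℚ) ≤ (mahlerOp ℓ hℓ n a f).orderTop := by
      unfold mahlerOp
      apply le_orderTop_sum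
      intro i hi
      by_cases hai : a i = 0
      · simp [hai]
      · rw [hTorder i hai]
        exact_mod_cast hψle i (Nat.lt_add_one_iff.mp (Finset.mem_range.mp hi)) hai
    refine ⟨by rw [hOT, WithTop.map_coe]; exact hOT1, ?_⟩
    intro hslope
    obtain ⟨p, hp, hpe⟩ := psi_mem h0 v
    obtain ⟨i0, hi0n, j, hj, rfl⟩ := mem_PL_iff.mp hp
    have hai0 : a i0 ≠ 0 := fun h => by simp [h] at hj
    have hd0 : (((a i0).natTrailingDegree : ℕ) : ℚ) ≤ (j : ℚ) := by
      exact_mod_cast Polynomial.natTrailingDegree_le_of_mem_supp j hj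
    have hci0 : ((a i0).natTrailingDegree : ℚ) + (ℓ:ℚ)^i0 * v = psi ℓ n a v := by
      have h1 := hψle i0 hi0n hai0
      have hpe' : psi ℓ n a v = v * (ℓ:ℚ)^i0 + (j : ℚ) := hpe
      have h2 : psi ℓ n a v ≥ ((a i0).natTrailingDegree : ℚ) + (ℓ:ℚ)^i0 * v := by
        rw [hpe']; linarith
      linarith
    have huniq : ∀ i ≤ n, a i ≠ 0 →
        ((a i).natTrailingDegree : ℚ) + (ℓ:ℚ)^i * v = psi ℓ n a v → i = i0 := by
      intro i hi hai hci
      by_contra hne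
      have hμ : (-v) ∈ slopeSet ℓ n a := by
        refine ⟨psi ℓ n a v, ⟨((ℓ:ℚ)^i, (((a i).natTrailingDegree : ℕ) : ℚ)),
          hPLi i hi hai, ((ℓ:ℚ)^i0, (((a i0).natTrailingDegree : ℕ) : ℚ)),
          hPLi i0 hi0n hai0, ?_,
          show (((a i).natTrailingDegree : ℕ) : ℚ) - (-v) * (ℓ:ℚ)^i = psi ℓ n a v by linarith,
          show (((a i0).natTrailingDegree : ℕ) : ℚ) - (-v) * (ℓ:ℚ)^i0 = psi ℓ n a v by
            linarith⟩, ?_⟩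
        · intro h
          exact hne ((pow_right_strictMono₀ h1ℓ).injective (congrArg Prod.fst h))
        · intro r hr
          have h := psi_le h0 v hr
          linarith
      exact hslope (-v) hμ (by rw [hOT, neg_neg])
    have hcoeff : (mahlerOp ℓ hℓ n a f).coeff (psi ℓ n a v) ≠ 0 := by
      unfold mahlerOp
      rw [show ((∑ i ∈ Finset.range (n + 1),
          HahnSeries.ofPowerSeries ℚ K (a i : PowerSeries K) *
            HahnSeries.embDomain (scaleEmb ℓ hℓ i) f).coeff (psi ℓ n a v))
        = ∑ i ∈ Finset.range (n + 1),
          (HahnSeries.ofPowerSeries ℚ K (a i : PowerSeries K) *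
            HahnSeries.embDomain (scaleEmb ℓ hℓ i) f).coeff (psi ℓ n a v) from
        map_sum (HahnSeries.coeff.addMonoidHom (psi ℓ n a v)) _ _]
      rw [Finset.sum_eq_single i0]
      · rw [← hci0]
        have := term_leadCoeff hai0 hf (scaleEmb ℓ hℓ i0)
        rw [scaleEmb_apply] at this
        exact this
      · intro i hi hine
        by_cases hai : a i = 0
        · simp [hai]
        · apply HahnSeries.coeff_eq_zero_of_lt_orderTop
          rw [hTorder i hai]
          have hle := hψle i (Nat.lt_add_one_iff.mp (Finset.mem_range.mp hi)) hai
          have hne : psi ℓ n a v ≠ ((a i).natTrailingDegree : ℚ) + (ℓ:ℚ)^i * v :=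
            fun h => hine (huniq i (Nat.lt_add_one_iff.mp (Finset.mem_range.mp hi)) hai h.symm)
          exact_mod_cast lt_of_le_of_ne hle hne
      · intro h
        exact absurd (Finset.mem_range.mpr (Nat.lt_add_one_iff.mpr hi0n)) h
    rw [hOT, WithTop.map_coe]
    exact le_antisymm (HahnSeries.orderTop_le_of_coeff_ne_zero hcoeff) hOT1
end

section
/- Two Hahn series solutions f, g of the Mahler equation L(y) = a_{-∞} are equal if and only if their restrictions to the finite index set −S(L) are equal, i.e., f_γ = g_γ for all γ ∈ −S(L) implies f = g. -/
open Polynomial Finset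

section Aux

variable {K : Type*} [Field K]

lemma coeff_finsum {α : Type*} (s : Finset α) (F : α → HahnSeries ℚ K) (b : ℚ) :
    (∑ i ∈ s, F i).coeff b = ∑ i ∈ s, (F i).coeff b := by
  classical
  induction s using Finset.cons_induction with
  | empty => simp
  | cons i s hi ih => rw [Finset.sum_cons, Finset.sum_cons, HahnSeries.coeff_add, ih]

lemma ofPS_poly (p : K[X]) :
    HahnSeries.ofPowerSeries ℚ K (p : PowerSeries K)
      = ∑ j ∈ p.support, HahnSeries.single (j : ℚ) (p.coeff j) := by
  rw [← Polynomial.coeToPowerSeries.ringHom_apply]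
  conv_lhs => rw [p.as_sum_support_C_mul_X_pow]
  rw [map_sum, map_sum]
  refine Finset.sum_congr rfl fun j hj => ?_
  rw [map_mul, map_mul, map_pow, map_pow, Polynomial.coeToPowerSeries.ringHom_apply,
    Polynomial.coeToPowerSeries.ringHom_apply, Polynomial.coe_C, Polynomial.coe_X,
    HahnSeries.ofPowerSeries_C, HahnSeries.ofPowerSeries_X, HahnSeries.single_pow,
    show HahnSeries.C (p.coeff j) = HahnSeries.single (0 : ℚ) (p.coeff j) from rfl,
    HahnSeries.single_mul_single]
  simp

lemma single_mul_coeff (j : ℚ) (c : K) (y : HahnSeries ℚ K) (b : ℚ) :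
    (HahnSeries.single j c * y).coeff b = c * y.coeff (b - j) := by
  have := HahnSeries.coeff_single_mul_add (r := c) (x := y) (a := b - j) (b := j)
  rwa [sub_add_cancel] at this

lemma embDomain_scale_coeff (ℓ : ℕ) (hℓ : 2 ≤ ℓ) (i : ℕ) (x : HahnSeries ℚ K) (q : ℚ) :
    (HahnSeries.embDomain (scaleEmb ℓ hℓ i) x).coeff q = x.coeff (q / (ℓ : ℚ) ^ i) := by
  have hpos : (0 : ℚ) < (ℓ : ℚ) ^ i :=
    pow_pos (by exact_mod_cast Nat.lt_of_lt_of_le Nat.zero_lt_two hℓ) i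
  have h2 : scaleEmb ℓ hℓ i (q / (ℓ : ℚ) ^ i) = q := by
    show (ℓ : ℚ) ^ i * (q / (ℓ : ℚ) ^ i) = q
    field_simp
  simpa [h2] using
    (HahnSeries.embDomain_coeff (f := scaleEmb ℓ hℓ i) (x := x) (a := q / (ℓ : ℚ) ^ i))

lemma mahler_coeff (ℓ n : ℕ) (hℓ : 2 ≤ ℓ) (a : ℕ → Polynomial K) (x : HahnSeries ℚ K) (b : ℚ) :
    (mahlerOp ℓ hℓ n a x).coeff b
      = ∑ i ∈ Finset.range (n + 1), ∑ j ∈ (a i).support,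
          (a i).coeff j * x.coeff ((b - (j : ℚ)) / (ℓ : ℚ) ^ i) := by
  rw [mahlerOp, coeff_finsum]
  refine Finset.sum_congr rfl fun i _ => ?_
  rw [ofPS_poly, Finset.sum_mul, coeff_finsum]
  refine Finset.sum_congr rfl fun j _ => ?_
  rw [single_mul_coeff, embDomain_scale_coeff]

lemma mem_PL {ℓ n : ℕ} {a : ℕ → Polynomial K} {i j : ℕ} (hi : i ∈ Finset.range (n + 1))
    (hj : j ∈ (a i).support) : ((ℓ : ℚ) ^ i, (j : ℚ)) ∈ PL ℓ n a := by
  rw [PL, Finset.mem_biUnion]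
  exact ⟨i, hi, Finset.mem_image_of_mem _ hj⟩

end Aux

theorem stmt5 {K : Type*} [Field K] (ℓ n : ℕ) (hℓ : 2 ≤ ℓ) (a : ℕ → Polynomial K)
    (h0 : a 0 ≠ 0) (hn : a n ≠ 0) (ainf f g : HahnSeries ℚ K)
    (hf : mahlerOp ℓ hℓ n a f = ainf) (hg : mahlerOp ℓ hℓ n a g = ainf) :
    f = g ↔ ∀ γ : ℚ, -γ ∈ slopeSet ℓ n a → f.coeff γ = g.coeff γ := by
  classical
  constructor
  · rintro rfl γ _; rfl
  · intro hcoe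
    by_contra hne
    have hne' : f - g ≠ 0 := sub_ne_zero.mpr hne
    set h := f - g with hh
    set γ := h.order with hγ
    have hc : h.coeff γ ≠ 0 := fun hz => hne' (HahnSeries.coeff_order_eq_zero.mp hz)
    have hl1 : (1 : ℚ) < (ℓ : ℚ) := by exact_mod_cast Nat.lt_of_lt_of_le Nat.one_lt_two hℓ
    have hlpos : ∀ i : ℕ, (0 : ℚ) < (ℓ : ℚ) ^ i := fun i => pow_pos (lt_trans one_pos hl1) i
    -- the finset of exponents
    have hPLne : (PL ℓ n a).Nonempty := by
      obtain ⟨j, hj⟩ := Polynomial.support_nonempty.mpr hn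
      exact ⟨_, mem_PL (Finset.self_mem_range_succ n) hj⟩
    set S : Finset ℚ := (PL ℓ n a).image (fun p => p.2 + γ * p.1) with hS
    have hSne : S.Nonempty := hPLne.image _
    set b : ℚ := S.min' hSne with hb
    have hble : ∀ p ∈ PL ℓ n a, b ≤ p.2 + γ * p.1 := fun p hp =>
      Finset.min'_le _ _ (Finset.mem_image_of_mem _ hp)
    have hbmem : b ∈ S := Finset.min'_mem _ _
    rw [hS, Finset.mem_image] at hbmem
    obtain ⟨p0, hp0PL, hp0b⟩ := hbmem
    -- the coefficient claim
    have claim : ∀ i ∈ Finset.range (n + 1), ∀ j ∈ (a i).support,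
        h.coeff ((b - (j : ℚ)) / (ℓ : ℚ) ^ i)
          = if (j : ℚ) + γ * (ℓ : ℚ) ^ i = b then h.coeff γ else 0 := by
      intro i hi j hj
      have hmem := mem_PL (ℓ := ℓ) hi hj
      have hle : b ≤ (j : ℚ) + γ * (ℓ : ℚ) ^ i := by
        have := hble _ hmem; simpa using this
      by_cases hcase : (j : ℚ) + γ * (ℓ : ℚ) ^ i = b
      · rw [if_pos hcase, ← hcase]
        congr 1
        field_simp
        ring
      · rw [if_neg hcase]
        have hlt : (b - (j : ℚ)) / (ℓ : ℚ) ^ i < γ := by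
          rw [div_lt_iff₀ (hlpos i)]
          have : b < (j : ℚ) + γ * (ℓ : ℚ) ^ i := lt_of_le_of_ne hle (Ne.symm hcase)
          linarith
        exact HahnSeries.coeff_eq_zero_of_lt_order hlt
    -- the total sum is zero
    have hzero : ∑ i ∈ Finset.range (n + 1), ∑ j ∈ (a i).support,
        (a i).coeff j * h.coeff ((b - (j : ℚ)) / (ℓ : ℚ) ^ i) = 0 := by
      have hf' := mahler_coeff ℓ n hℓ a f b
      have hg' := mahler_coeff ℓ n hℓ a g b
      have : ∑ i ∈ Finset.range (n + 1), ∑ j ∈ (a i).support,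
          (a i).coeff j * h.coeff ((b - (j : ℚ)) / (ℓ : ℚ) ^ i)
          = (mahlerOp ℓ hℓ n a f).coeff b - (mahlerOp ℓ hℓ n a g).coeff b := by
        rw [hf', hg', ← Finset.sum_sub_distrib]
        refine Finset.sum_congr rfl fun i _ => ?_
        rw [← Finset.sum_sub_distrib]
        refine Finset.sum_congr rfl fun j _ => ?_
        rw [hh, HahnSeries.coeff_sub]
        ring
      rw [this, hf, hg, sub_self]
    -- T is the set of argmins
    set T : Finset (ℚ × ℚ) := (PL ℓ n a).filter (fun p => p.2 + γ * p.1 = b) with hT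
    have hp0T : p0 ∈ T := Finset.mem_filter.mpr ⟨hp0PL, hp0b⟩
    by_cases htwo : ∃ p ∈ T, ∃ q ∈ T, p ≠ q
    · -- two argmins : -γ is a slope, contradiction with hypothesis
      obtain ⟨p, hp, q, hq, hpq⟩ := htwo
      rw [hT, Finset.mem_filter] at hp hq
      have hslope : -γ ∈ slopeSet ℓ n a := by
        rw [slopeSet, Set.mem_setOf_eq]
        exact ⟨b, ⟨p, hp.1, q, hq.1, hpq, by linarith [hp.2], by linarith [hq.2]⟩,
          fun r hr => by linarith [hble r hr]⟩
      have := hcoe γ hslope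
      apply hc
      rw [hh, HahnSeries.coeff_sub, this, sub_self]
    · -- unique argmin : the coefficient at b is nonzero, contradiction
      push_neg at htwo
      -- p0 comes from some (i0, j0)
      have hp0' : ∃ i0 ∈ Finset.range (n + 1), ∃ j0 ∈ (a i0).support,
          p0 = ((ℓ : ℚ) ^ i0, (j0 : ℚ)) := by
        rw [PL, Finset.mem_biUnion] at hp0PL
        obtain ⟨i0, hi0, hmem⟩ := hp0PL
        rw [Finset.mem_image] at hmem
        obtain ⟨j0, hj0, hmem⟩ := hmem
        exact ⟨i0, hi0, j0, hj0, hmem.symm⟩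
      obtain ⟨i0, hi0, j0, hj0, hp0eq⟩ := hp0'
      have hpowinj : Function.Injective (fun i : ℕ => (ℓ : ℚ) ^ i) :=
        (pow_right_strictMono₀ hl1).injective
      have key : ∀ i ∈ Finset.range (n + 1), ∀ j ∈ (a i).support,
          (a i).coeff j * h.coeff ((b - (j : ℚ)) / (ℓ : ℚ) ^ i)
            = if i = i0 ∧ j = j0 then (a i0).coeff j0 * h.coeff γ else 0 := by
        intro i hi j hj
        rw [claim i hi j hj]
        by_cases hij : i = i0 ∧ j = j0
        · obtain ⟨rfl, rfl⟩ := hij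
          have hcond : (j : ℚ) + γ * (ℓ : ℚ) ^ i = b := by
            have := hp0b
            rw [hp0eq] at this
            simpa using this
          rw [if_pos hcond, if_pos ⟨rfl, rfl⟩]
        · rw [if_neg hij]
          by_cases hcond : (j : ℚ) + γ * (ℓ : ℚ) ^ i = b
          · exfalso
            have hmemT : ((ℓ : ℚ) ^ i, (j : ℚ)) ∈ T :=
              Finset.mem_filter.mpr ⟨mem_PL hi hj, by simpa using hcond⟩
            have heqp0 := htwo _ hmemT p0 hp0T
            rw [hp0eq, Prod.mk.injEq] at heqp0
            exact hij ⟨hpowinj heqp0.1, Nat.cast_injective heqp0.2⟩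
          · rw [if_neg hcond, mul_zero]
      have hval : ∑ i ∈ Finset.range (n + 1), ∑ j ∈ (a i).support,
          (a i).coeff j * h.coeff ((b - (j : ℚ)) / (ℓ : ℚ) ^ i)
          = (a i0).coeff j0 * h.coeff γ := by
        rw [Finset.sum_congr rfl (fun i hi => Finset.sum_congr rfl (key i hi))]
        rw [Finset.sum_eq_single_of_mem i0 hi0 (fun i _ hne2 => by simp [hne2])]
        simp only [true_and]
        rw [Finset.sum_ite_eq' (a i0).support j0
          (fun _ => (a i0).coeff j0 * h.coeff γ), if_pos hj0]
      rw [hzero] at hval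
      have hcoeff0 : (a i0).coeff j0 ≠ 0 := Polynomial.mem_support_iff.mp hj0
      exact (mul_ne_zero hcoeff0 hc) hval.symm
end

section
/- If q ∈ ℚ satisfies −μ_k ≤ π(q) ≤ −μ_{k−1} for some k ∈ {1,...,κ+1} (with μ_0 = −∞, μ_{κ+1} = +∞), then π(q) = (q − β_{k−1}) / ℓ^{α_{k−1}}, where (ℓ^{α_{k−1}}, β_{k−1}) is the (k−1)-th vertex of the Newton polygon N(L). -/
open Polynomial Finset

def Minimizes {K : Type*} [Field K] (ℓ n : ℕ) (a : ℕ → Polynomial K) (μ : ℚ)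
    (p : ℚ × ℚ) : Prop :=
  p ∈ PL ℓ n a ∧ ∀ q ∈ PL ℓ n a, p.2 - μ * p.1 ≤ q.2 - μ * q.1

lemma PL_fst_pos {K : Type*} [Field K] {ℓ n : ℕ} (hℓ : 2 ≤ ℓ) {a : ℕ → Polynomial K}
    {x : ℚ × ℚ} (hx : x ∈ PL ℓ n a) : 0 < x.1 := by
  simp only [PL, Finset.mem_biUnion, Finset.mem_image] at hx
  obtain ⟨i, -, j, -, rfl⟩ := hx
  exact pow_pos (by exact_mod_cast Nat.lt_of_lt_of_le Nat.zero_lt_two hℓ) i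

lemma piF_spec {K : Type*} [Field K] (ℓ n : ℕ) (a : ℕ → Polynomial K) (h0 : a 0 ≠ 0) (q : ℚ) :
    ∃ r ∈ PL ℓ n a, (q - r.2) / r.1 = piF ℓ n a q ∧
      ∀ w ∈ PL ℓ n a, (q - w.2) / w.1 ≤ piF ℓ n a q := by
  have hne : (PL ℓ n a).Nonempty := by
    obtain ⟨j, hj⟩ := Polynomial.support_nonempty.2 h0
    exact ⟨((ℓ : ℚ) ^ 0, (j : ℚ)), Finset.mem_biUnion.2
      ⟨0, Finset.mem_range.2 (Nat.succ_pos n), Finset.mem_image.2 ⟨j, hj, rfl⟩⟩⟩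
  have hsne : ((PL ℓ n a).image fun p => (q - p.2) / p.1).Nonempty := hne.image _
  obtain ⟨b, hb⟩ := Finset.max_of_nonempty hsne
  have hpi : piF ℓ n a q = b := by rw [piF, hb]; rfl
  obtain ⟨r, hr, hrb⟩ := Finset.mem_image.1 (Finset.mem_of_max hb)
  refine ⟨r, hr, by rw [hpi, hrb], ?_⟩
  intro w hw
  rw [hpi]
  exact_mod_cast Finset.le_max_of_eq (Finset.mem_image.2 ⟨w, hw, rfl⟩) hb

lemma minimizes_right {K : Type*} [Field K] {ℓ n : ℕ} (hℓ : 2 ≤ ℓ) {a : ℕ → Polynomial K}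
    {μ₀ μs : ℚ} {v : ℚ × ℚ}
    (hv : Minimizes ℓ n a μ₀ v) (hR : ∀ w, Minimizes ℓ n a μ₀ w → w.1 ≤ v.1)
    (hle : μ₀ ≤ μs)
    (hno : ∀ t ∈ slopeSet ℓ n a, ¬(μ₀ < t ∧ t < μs)) :
    Minimizes ℓ n a μs v := by
  refine ⟨hv.1, ?_⟩
  by_contra hcon
  push_neg at hcon
  obtain ⟨r, hrPL, hr⟩ := hcon
  set S := (PL ℓ n a).filter (fun w => w.2 - μs * w.1 < v.2 - μs * v.1) with hS
  have hSne : S.Nonempty := ⟨r, Finset.mem_filter.2 ⟨hrPL, hr⟩⟩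
  have key : ∀ w ∈ S, v.1 < w.1 ∧ μ₀ < (w.2 - v.2) / (w.1 - v.1) := by
    intro w hw
    obtain ⟨hwPL, hw2⟩ := Finset.mem_filter.1 hw
    have h1 := hv.2 w hwPL
    have hlt : μ₀ < μs := by
      rcases eq_or_lt_of_le hle with h | h
      · exfalso; rw [h] at h1; linarith
      · exact h
    have hv1 : v.1 < w.1 := by nlinarith
    have hd : (0:ℚ) < w.1 - v.1 := by linarith
    have hmu0 : μ₀ * (w.1 - v.1) ≤ w.2 - v.2 := by nlinarith
    have hne : μ₀ ≠ (w.2 - v.2) / (w.1 - v.1) := by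
      intro he
      have he2 : μ₀ * (w.1 - v.1) = w.2 - v.2 := by
        rw [he]; field_simp
      have hmw : Minimizes ℓ n a μ₀ w := by
        refine ⟨hwPL, fun u hu => ?_⟩
        have := hv.2 u hu
        nlinarith
      have := hR w hmw
      linarith
    exact ⟨hv1, lt_of_le_of_ne ((le_div_iff₀ hd).2 hmu0) hne⟩
  obtain ⟨w0, hw0S, hw0min⟩ :=
    S.exists_min_image (fun w => (w.2 - v.2) / (w.1 - v.1)) hSne
  obtain ⟨hw0PL, hw0beat⟩ := Finset.mem_filter.1 hw0S
  obtain ⟨hw01, ht0gt⟩ := key w0 hw0S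
  set t0 := (w0.2 - v.2) / (w0.1 - v.1) with ht0
  have hd0 : (0:ℚ) < w0.1 - v.1 := by linarith
  have ht0eq : t0 * (w0.1 - v.1) = w0.2 - v.2 := by
    rw [ht0]; field_simp
  have ht0lt : t0 < μs := by
    rw [ht0, div_lt_iff₀ hd0]; nlinarith
  refine hno t0 ?_ ⟨ht0gt, ht0lt⟩
  refine ⟨v.2 - t0 * v.1, ⟨v, hv.1, w0, hw0PL, ?_, rfl, by linarith⟩, ?_⟩
  · intro h; rw [h] at hw01; exact lt_irrefl _ hw01
  · intro x hxPL
    by_cases hxS : x ∈ S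
    · obtain ⟨hx1, -⟩ := key x hxS
      have hdx : (0:ℚ) < x.1 - v.1 := by linarith
      have := hw0min x hxS
      have : t0 * (x.1 - v.1) ≤ x.2 - v.2 := (le_div_iff₀ hdx).1 (ht0 ▸ this)
      nlinarith
    · have hx2 : v.2 - μs * v.1 ≤ x.2 - μs * x.1 := by
        by_contra hc
        exact hxS (Finset.mem_filter.2 ⟨hxPL, by push_neg at hc; linarith⟩)
      have hx1 := hv.2 x hxPL
      nlinarith [mul_nonneg (by linarith : (0:ℚ) ≤ μs - t0)
          (by nlinarith : (0:ℚ) ≤ (x.2 - v.2) - μ₀ * (x.1 - v.1)),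
        mul_nonneg (by linarith : (0:ℚ) ≤ t0 - μ₀)
          (by nlinarith : (0:ℚ) ≤ (x.2 - v.2) - μs * (x.1 - v.1))]

lemma minimizes_left {K : Type*} [Field K] {ℓ n : ℕ} (hℓ : 2 ≤ ℓ) {a : ℕ → Polynomial K}
    {μ₀ μs : ℚ} {v : ℚ × ℚ}
    (hv : Minimizes ℓ n a μ₀ v) (hL : ∀ w, Minimizes ℓ n a μ₀ w → v.1 ≤ w.1)
    (hle : μs ≤ μ₀)
    (hno : ∀ t ∈ slopeSet ℓ n a, ¬(μs < t ∧ t < μ₀)) :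
    Minimizes ℓ n a μs v := by
  refine ⟨hv.1, ?_⟩
  by_contra hcon
  push_neg at hcon
  obtain ⟨r, hrPL, hr⟩ := hcon
  set S := (PL ℓ n a).filter (fun w => w.2 - μs * w.1 < v.2 - μs * v.1) with hS
  have hSne : S.Nonempty := ⟨r, Finset.mem_filter.2 ⟨hrPL, hr⟩⟩
  have key : ∀ w ∈ S, w.1 < v.1 ∧ (w.2 - v.2) / (w.1 - v.1) < μ₀ := by
    intro w hw
    obtain ⟨hwPL, hw2⟩ := Finset.mem_filter.1 hw
    have h1 := hv.2 w hwPL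
    have hlt : μs < μ₀ := by
      rcases eq_or_lt_of_le hle with h | h
      · exfalso; rw [← h] at h1; linarith
      · exact h
    have hv1 : w.1 < v.1 := by nlinarith
    have hd : w.1 - v.1 < (0:ℚ) := by linarith
    have hmu0 : μ₀ * (w.1 - v.1) ≤ w.2 - v.2 := by nlinarith
    have hne : (w.2 - v.2) / (w.1 - v.1) ≠ μ₀ := by
      intro he
      have he2 : w.2 - v.2 = μ₀ * (w.1 - v.1) := (div_eq_iff (ne_of_lt hd)).1 he
      have hmw : Minimizes ℓ n a μ₀ w := by
        refine ⟨hwPL, fun u hu => ?_⟩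
        have := hv.2 u hu
        nlinarith
      have := hL w hmw
      linarith
    refine ⟨hv1, lt_of_le_of_ne ((div_le_iff_of_neg hd).2 hmu0) hne⟩
  obtain ⟨w0, hw0S, hw0max⟩ :=
    S.exists_max_image (fun w => (w.2 - v.2) / (w.1 - v.1)) hSne
  obtain ⟨hw0PL, hw0beat⟩ := Finset.mem_filter.1 hw0S
  obtain ⟨hw01, ht0lt⟩ := key w0 hw0S
  set t0 := (w0.2 - v.2) / (w0.1 - v.1) with ht0
  have hd0 : w0.1 - v.1 < (0:ℚ) := by linarith
  have ht0eq : t0 * (w0.1 - v.1) = w0.2 - v.2 := by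
    rw [ht0, div_mul_cancel₀ _ (ne_of_lt hd0)]
  have ht0gt : μs < t0 := by
    rw [ht0, lt_div_iff_of_neg hd0]; nlinarith
  refine hno t0 ?_ ⟨ht0gt, ht0lt⟩
  refine ⟨v.2 - t0 * v.1, ⟨v, hv.1, w0, hw0PL, ?_, rfl, by linarith⟩, ?_⟩
  · intro h; rw [h] at hw01; exact lt_irrefl _ hw01
  · intro x hxPL
    by_cases hxS : x ∈ S
    · obtain ⟨hx1, -⟩ := key x hxS
      have hdx : x.1 - v.1 < (0:ℚ) := by linarith
      have := hw0max x hxS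
      have : t0 * (x.1 - v.1) ≤ x.2 - v.2 := (div_le_iff_of_neg hdx).1 (ht0 ▸ this)
      nlinarith
    · have hx2 : v.2 - μs * v.1 ≤ x.2 - μs * x.1 := by
        by_contra hc
        exact hxS (Finset.mem_filter.2 ⟨hxPL, by push_neg at hc; linarith⟩)
      have hx1 := hv.2 x hxPL
      nlinarith [mul_nonneg (by linarith : (0:ℚ) ≤ μ₀ - t0)
          (by nlinarith : (0:ℚ) ≤ (x.2 - v.2) - μs * (x.1 - v.1)),
        mul_nonneg (by linarith : (0:ℚ) ≤ t0 - μs)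
          (by nlinarith : (0:ℚ) ≤ (x.2 - v.2) - μ₀ * (x.1 - v.1))]

theorem stmt8 {K : Type*} [Field K] (ℓ n : ℕ) (hℓ : 2 ≤ ℓ) (a : ℕ → Polynomial K)
    (h0 : a 0 ≠ 0) (hn : a n ≠ 0)
    (κ : ℕ) (hκ : 1 ≤ κ) (μ : ℕ → ℚ)
    (hmono : ∀ k l, 1 ≤ k → k < l → l ≤ κ → μ k < μ l)
    (hslopes : ∀ m : ℚ, m ∈ slopeSet ℓ n a ↔ ∃ k, 1 ≤ k ∧ k ≤ κ ∧ μ k = m)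
    (p : ℕ → ℚ × ℚ)
    (hp0 : Minimizes ℓ n a (μ 1) (p 0) ∧
      ∀ q : ℚ × ℚ, Minimizes ℓ n a (μ 1) q → (p 0).1 ≤ q.1)
    (hpk : ∀ k, 1 ≤ k → k ≤ κ → Minimizes ℓ n a (μ k) (p k) ∧
      ∀ q : ℚ × ℚ, Minimizes ℓ n a (μ k) q → q.1 ≤ (p k).1)
    (q : ℚ) (k : ℕ) (hk1 : 1 ≤ k) (hk2 : k ≤ κ + 1)
    (hlow : k ≤ κ → -(μ k) ≤ piF ℓ n a q) (hhigh : 2 ≤ k → piF ℓ n a q ≤ -(μ (k - 1))) :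
    piF ℓ n a q = (q - (p (k - 1)).2) / (p (k - 1)).1 := by
  set π := piF ℓ n a q with hπ
  obtain ⟨r, hrPL, hrq, hmax⟩ := piF_spec ℓ n a h0 q
  have hμle : ∀ i j, 1 ≤ i → i ≤ j → j ≤ κ → μ i ≤ μ j := by
    intro i j hi hij hj
    rcases eq_or_lt_of_le hij with h | h
    · rw [h]
    · exact le_of_lt (hmono i j hi h hj)
  have hvmin : Minimizes ℓ n a (-π) (p (k - 1)) := by
    rcases eq_or_lt_of_le hk1 with h1 | h2
    · -- k = 1
      have hk : k - 1 = 0 := by omega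
      rw [hk]
      refine minimizes_left hℓ hp0.1 hp0.2 ?_ ?_
      · have := hlow (by omega)
        have hμ1 : μ k = μ 1 := by rw [← h1]
        linarith [hμ1 ▸ this]
      · intro t ht hc
        obtain ⟨j, hj1, hj2, hj3⟩ := (hslopes t).1 ht
        have : μ 1 ≤ μ j := hμle 1 j le_rfl hj1 hj2
        rw [hj3] at this
        exact absurd hc.2 (not_lt.2 this)
    · -- 2 ≤ k
      have hk2' : 2 ≤ k := h2
      have hkm1 : 1 ≤ k - 1 := by omega
      have hkm2 : k - 1 ≤ κ := by omega
      obtain ⟨hmin, hright⟩ := hpk (k - 1) hkm1 hkm2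
      refine minimizes_right hℓ hmin hright ?_ ?_
      · have := hhigh hk2'
        linarith
      · intro t ht hc
        obtain ⟨j, hj1, hj2, hj3⟩ := (hslopes t).1 ht
        subst hj3
        rcases le_or_gt j (k - 1) with hj | hj
        · have : μ j ≤ μ (k - 1) := hμle j (k - 1) hj1 hj hkm2
          exact absurd hc.1 (not_lt.2 this)
        · have hkκ : k ≤ κ := by omega
          have h1 : -(μ k) ≤ π := hlow hkκ
          have h2 : μ k ≤ μ j := hμle k j (by omega) (by omega) hj2
          have : -π ≤ μ j := by linarith
          exact absurd hc.2 (not_lt.2 this)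
  have hvPL := hvmin.1
  have hv1 : 0 < (p (k - 1)).1 := PL_fst_pos hℓ hvPL
  have hr1 : 0 < r.1 := PL_fst_pos hℓ hrPL
  have h1 : q - r.2 = π * r.1 := (div_eq_iff (ne_of_gt hr1)).1 hrq
  have h3 : q - (p (k - 1)).2 ≤ π * (p (k - 1)).1 :=
    (div_le_iff₀ hv1).1 (hmax _ hvPL)
  have h4 := hvmin.2 r hrPL
  rw [eq_comm, div_eq_iff (ne_of_gt hv1)]
  linarith
end
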